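/- Let H_s = H_b = H be a completely non-degenerate Hamiltonian on a finite-dimensional space and U a unitary on H_s ⊗ H_b with [U, H⊗I + I⊗H] = 0. If the induced thermal operation Λ_β(ρ) = Tr_b[U(ρ ⊗ τ_β)U†] is the constant map ρ ↦ τ_β for all ρ (for some β ∈ (0,∞)), then U acts on energy eigenstates as U(|E_m⟩ ⊗ |E_k⟩) = e^{iθ_{km}} |E_k⟩ ⊗ |E_m⟩ for all m,k; i.e., U is the SWAP operation up to local energy-preserving phases. -/

import Mathlib

open Matrix Kronecker BigOperators ComplexOrder
noncomputable section

/-- Partial trace over the second tensor factor. -/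
def ptraceB {n m : Type*} [Fintype m] (ρ : Matrix (n × m) (n × m) ℂ) : Matrix n n ℂ :=
  Matrix.of fun i j => ∑ k, ρ (i, k) (j, k)

/-- Partial trace over the first tensor factor. -/
def ptraceA {n m : Type*} [Fintype n] (ρ : Matrix (n × m) (n × m) ℂ) : Matrix m m ℂ :=
  Matrix.of fun i j => ∑ k, ρ (k, i) (k, j)

/-- Von Neumann entropy (natural log), via eigenvalues of a Hermitian matrix. -/
def vnEntropy {n : Type*} [Fintype n] [DecidableEq n] (ρ : Matrix n n ℂ) : ℝ :=
  if h : ρ.IsHermitian then -∑ i, (h.eigenvalues i) * Real.log (h.eigenvalues i) else 0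

/-- Gibbs (thermal) state at inverse temperature β. -/
def gibbs {n : Type*} [Fintype n] [DecidableEq n] (H : Matrix n n ℂ) (β : ℝ) : Matrix n n ℂ :=
  ((NormedSpace.exp ((-β : ℂ) • H)).trace)⁻¹ • NormedSpace.exp ((-β : ℂ) • H)

/-- A density operator: positive semidefinite with unit trace. -/
def IsDensity {n : Type*} [Fintype n] (ρ : Matrix n n ℂ) : Prop :=
  ρ.PosSemidef ∧ ρ.trace = 1

/-- A finite family of operators forms a POVM. -/
def IsPOVM {n ι : Type*} [Fintype n] [DecidableEq n] [Fintype ι] (M : ι → Matrix n n ℂ) : Prop :=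
  (∀ k, (M k).PosSemidef) ∧ ∑ k, M k = 1

lemma diag_sandwich {n : Type*} [Fintype n] [DecidableEq n] (U : Matrix n n ℂ) (c : n → ℂ) (i : n) :
    (U * Matrix.diagonal c * Uᴴ) i i = ∑ j, c j * ((Complex.normSq (U i j) : ℝ) : ℂ) := by
  rw [Matrix.mul_apply]
  refine Finset.sum_congr rfl fun j _ => ?_
  rw [Matrix.mul_diagonal, Matrix.conjTranspose_apply]
  have : U i j * c j * star (U i j) = c j * (U i j * (starRingEnd ℂ) (U i j)) := by
    simp [Complex.star_def]; ring
  rw [this, Complex.mul_conj]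

/-- if a completely non-degenerate Hamiltonian (written diagonally with
distinct eigenvalues `E k`) together with an energy-preserving unitary `U` induces the
constant thermal map `ρ ↦ τ_β`, then `U` is the SWAP operation up to phases on the energy
eigenbasis: `U(|E_m⟩⊗|E_k⟩) = e^{iθ_{mk}} |E_k⟩⊗|E_m⟩`. -/
theorem thermal_map_unitary_is_swap
    {n : Type*} [Fintype n] [DecidableEq n] [Nonempty n]
    (E : n → ℝ) (hE : Function.Injective E)
    (β : ℝ) (hβ : 0 < β)
    (U : Matrix (n × n) (n × n) ℂ) (hU : U ∈ Matrix.unitaryGroup (n × n) ℂ)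
    (hcomm :
      U * ((Matrix.diagonal fun k => (E k : ℂ)) ⊗ₖ (1 : Matrix n n ℂ)
            + (1 : Matrix n n ℂ) ⊗ₖ (Matrix.diagonal fun k => (E k : ℂ)))
      = ((Matrix.diagonal fun k => (E k : ℂ)) ⊗ₖ (1 : Matrix n n ℂ)
            + (1 : Matrix n n ℂ) ⊗ₖ (Matrix.diagonal fun k => (E k : ℂ))) * U)
    (τ : Matrix n n ℂ)
    (hτ : τ = Matrix.diagonal fun k =>
      ((Real.exp (-β * E k) / ∑ l, Real.exp (-β * E l) : ℝ) : ℂ))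
    (hconst : ∀ ρ : Matrix n n ℂ, IsDensity ρ → ptraceB (U * (ρ ⊗ₖ τ) * Uᴴ) = τ) :
    ∃ θ : n → n → ℝ, ∀ m k : n,
      U *ᵥ (Pi.single (m, k) 1 : n × n → ℂ)
        = Complex.exp ((θ m k : ℂ) * Complex.I) • (Pi.single (k, m) 1 : n × n → ℂ) := by
  classical
  set p : n → ℝ := fun k => Real.exp (-β * E k) / ∑ l, Real.exp (-β * E l) with hp
  set f : (n × n) → (n × n) → ℝ := fun i j => Complex.normSq (U i j) with hf
  -- positivity of partition function and p
  have hsum : 0 < ∑ l, Real.exp (-β * E l) :=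
    Finset.sum_pos (fun l _ => Real.exp_pos _) Finset.univ_nonempty
  have hppos : ∀ k, 0 < p k := fun k => div_pos (Real.exp_pos _) hsum
  have hpinj : Function.Injective p := by
    intro x y hxy
    rw [hp] at hxy
    have h1 : Real.exp (-β * E x) = Real.exp (-β * E y) := (div_left_inj' hsum.ne').mp hxy
    have h2 := Real.exp_injective h1
    exact hE (mul_left_cancel₀ (neg_ne_zero.mpr hβ.ne') h2)
  -- unitarity: row and column sums of f
  have hU1 : U * Uᴴ = 1 := (Matrix.mem_unitaryGroup_iff.mp hU)
  have hU2 : Uᴴ * U = 1 := (Matrix.mem_unitaryGroup_iff'.mp hU)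
  have hrow : ∀ i : n × n, ∑ j, f i j = 1 := by
    intro i
    have h := congrFun (congrFun hU1 i) i
    rw [Matrix.mul_apply, Matrix.one_apply_eq] at h
    have h2 : ∑ j, ((Complex.normSq (U i j) : ℝ) : ℂ) = 1 := by
      rw [← h]
      refine Finset.sum_congr rfl fun j _ => ?_
      rw [Matrix.conjTranspose_apply, ← Complex.mul_conj]
      rfl
    have h3 : ((∑ j, Complex.normSq (U i j) : ℝ) : ℂ) = ((1 : ℝ) : ℂ) := by push_cast; exact h2
    exact_mod_cast h3
  have hcol : ∀ j : n × n, ∑ i, f i j = 1 := by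
    intro j
    have h := congrFun (congrFun hU2 j) j
    rw [Matrix.mul_apply, Matrix.one_apply_eq] at h
    have h2 : ∑ i, ((Complex.normSq (U i j) : ℝ) : ℂ) = 1 := by
      rw [← h]
      refine Finset.sum_congr rfl fun i _ => ?_
      rw [Matrix.conjTranspose_apply, Complex.normSq_eq_conj_mul_self]
      rfl
    have h3 : ((∑ i, Complex.normSq (U i j) : ℝ) : ℂ) = ((1 : ℝ) : ℂ) := by push_cast; exact h2
    exact_mod_cast h3
  -- energy conservation
  have henergy : ∀ i j : n × n, U i j ≠ 0 → E i.1 + E i.2 = E j.1 + E j.2 := by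
    intro i j hij
    have hD : ((Matrix.diagonal fun k => (E k : ℂ)) ⊗ₖ (1 : Matrix n n ℂ)
            + (1 : Matrix n n ℂ) ⊗ₖ (Matrix.diagonal fun k => (E k : ℂ)))
        = Matrix.diagonal (fun q : n × n => ((E q.1 + E q.2 : ℝ) : ℂ)) := by
      rw [← Matrix.diagonal_one, Matrix.diagonal_kronecker_diagonal,
        Matrix.diagonal_kronecker_diagonal, Matrix.diagonal_add]
      funext q
      push_cast
      ring
    rw [hD] at hcomm
    have h := congrFun (congrFun hcomm i) j
    rw [Matrix.mul_diagonal, Matrix.diagonal_mul] at h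
    have h' : (((E j.1 + E j.2 : ℝ) : ℂ) - ((E i.1 + E i.2 : ℝ) : ℂ)) * U i j = 0 := by
      push_cast
      push_cast at h
      linear_combination h
    rcases mul_eq_zero.mp h' with h2 | h2
    · have h3 := sub_eq_zero.mp h2
      exact (Complex.ofReal_inj.mp h3).symm
    · exact absurd h2 hij
  -- the key identity from the constant thermal map
  have hkey : ∀ a m : n, ∑ b, ∑ k, p k * f (a, b) (m, k) = p a := by
    intro a m
    set ρ : Matrix n n ℂ := Matrix.diagonal (fun x => if x = m then (1:ℂ) else 0) with hρ
    clear_value ρ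
    have hdens : IsDensity ρ := by
      rw [hρ]
      constructor
      · refine Matrix.PosSemidef.diagonal fun i => ?_
        dsimp only
        split <;> simp
      · rw [Matrix.trace_diagonal]
        simp
    have h := hconst ρ hdens
    have h2 := congrFun (congrFun h a) a
    rw [hρ, hτ, Matrix.diagonal_kronecker_diagonal] at h2
    have h3 : ∀ b : n, (U * Matrix.diagonal (fun j : n × n => (if j.1 = m then (1:ℂ) else 0) * (p j.2 : ℂ)) * Uᴴ) (a,b) (a,b)
        = ∑ k, (p k : ℂ) * ((Complex.normSq (U (a,b) (m,k)) : ℝ) : ℂ) := by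
      intro b
      rw [diag_sandwich]
      rw [Fintype.sum_prod_type]
      rw [Finset.sum_eq_single m]
      · simp
      · intro m' _ hm'
        simp [hm']
      · simp
    have h4 : (∑ b, ∑ k, (p k : ℂ) * ((Complex.normSq (U (a,b) (m,k)) : ℝ) : ℂ)) = ((p a : ℝ) : ℂ) := by
      rw [← Finset.sum_congr rfl (fun b _ => h3 b)]
      have := h2
      simp only [ptraceB, Matrix.of_apply] at this
      rw [this]
      simp only [Matrix.diagonal_apply_eq]
      rfl
    have h5 : ((∑ b, ∑ k, p k * Complex.normSq (U (a,b) (m,k)) : ℝ) : ℂ) = ((p a : ℝ) : ℂ) := by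
      push_cast
      exact h4
    exact_mod_cast h5
  -- the zero-sum trick
  have hZ : ∑ i : n × n, ∑ j : n × n, f i j * (p i.1 - p j.2) ^ 2 = 0 := by
    have expand : ∀ i j : n × n, f i j * (p i.1 - p j.2) ^ 2
        = f i j * p i.1 ^ 2 - 2 * (p i.1 * (p j.2 * f i j)) + f i j * p j.2 ^ 2 := by
      intro i j; ring
    have split : ∑ i : n × n, ∑ j : n × n, f i j * (p i.1 - p j.2) ^ 2
        = (∑ i : n × n, ∑ j : n × n, f i j * p i.1 ^ 2)
          - 2 * (∑ i : n × n, ∑ j : n × n, p i.1 * (p j.2 * f i j))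
          + (∑ i : n × n, ∑ j : n × n, f i j * p j.2 ^ 2) := by
      simp_rw [expand, Finset.sum_add_distrib, Finset.sum_sub_distrib, ← Finset.mul_sum]
    have T1 : ∑ i : n × n, ∑ j : n × n, f i j * p i.1 ^ 2
        = (Fintype.card n : ℝ) * ∑ a, p a ^ 2 := by
      have e1 : ∀ i : n × n, ∑ j : n × n, f i j * p i.1 ^ 2 = p i.1 ^ 2 := by
        intro i; rw [← Finset.sum_mul, hrow i, one_mul]
      rw [Finset.sum_congr rfl fun i _ => e1 i, Fintype.sum_prod_type]
      simp [Finset.sum_const, Finset.card_univ, mul_comm, Finset.mul_sum]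
    have T3 : ∑ i : n × n, ∑ j : n × n, f i j * p j.2 ^ 2
        = (Fintype.card n : ℝ) * ∑ a, p a ^ 2 := by
      rw [Finset.sum_comm]
      have e1 : ∀ j : n × n, ∑ i : n × n, f i j * p j.2 ^ 2 = p j.2 ^ 2 := by
        intro j; rw [← Finset.sum_mul, hcol j, one_mul]
      rw [Finset.sum_congr rfl fun j _ => e1 j, Fintype.sum_prod_type]
      simp [Finset.sum_const, Finset.card_univ, Finset.mul_sum]
    have T2 : ∑ i : n × n, ∑ j : n × n, p i.1 * (p j.2 * f i j)
        = (Fintype.card n : ℝ) * ∑ a, p a ^ 2 := by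
      have e0 : ∑ i : n × n, ∑ j : n × n, p i.1 * (p j.2 * f i j)
          = ∑ a, ∑ b, ∑ m, ∑ k, p a * (p k * f (a, b) (m, k)) := by
        rw [Fintype.sum_prod_type]
        refine Finset.sum_congr rfl fun a _ => Finset.sum_congr rfl fun b _ => ?_
        rw [Fintype.sum_prod_type]
      rw [e0]
      have e1 : ∀ a m : n, ∑ b, ∑ k, p a * (p k * f (a, b) (m, k)) = p a * p a := by
        intro a m
        simp_rw [← Finset.mul_sum]
        rw [hkey a m]
      have e2 : ∀ a : n, ∑ b, ∑ m, ∑ k, p a * (p k * f (a, b) (m, k)) = ∑ _m : n, p a * p a := by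
        intro a
        rw [Finset.sum_comm]
        exact Finset.sum_congr rfl fun m _ => e1 a m
      rw [Finset.sum_congr rfl fun a _ => e2 a]
      simp only [Finset.sum_const, Finset.card_univ, nsmul_eq_mul]
      rw [← Finset.mul_sum]
      congr 1
      exact Finset.sum_congr rfl fun a _ => (sq (p a)).symm
    rw [split, T1, T2, T3]; ring
  -- each term vanishes
  have hpt : ∀ i j : n × n, f i j * (p i.1 - p j.2) ^ 2 = 0 := by
    have hZ' : ∑ q : (n × n) × (n × n), f q.1 q.2 * (p q.1.1 - p q.2.2) ^ 2 = 0 := by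
      rw [Fintype.sum_prod_type]; exact hZ
    intro i j
    refine (Finset.sum_eq_zero_iff_of_nonneg (fun x _ => ?_)).mp hZ' (i, j) (Finset.mem_univ _)
    exact mul_nonneg (by rw [hf]; exact Complex.normSq_nonneg _) (sq_nonneg _)
  -- vanishing off the swap positions
  have hvan : ∀ i j : n × n, i ≠ (j.2, j.1) → U i j = 0 := by
    intro i j hne
    by_contra hU0
    rcases eq_or_ne i.1 j.2 with h1 | h1
    · have h2 : i.2 ≠ j.1 := by
        intro h2
        exact hne (Prod.ext h1 h2)
      have hEeq := henergy i j hU0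
      have h3 : E i.2 = E j.1 := by
        rw [h1] at hEeq
        linarith
      exact h2 (hE h3)
    · have h4 := hpt i j
      have hne2 : (p i.1 - p j.2) ≠ 0 := sub_ne_zero.mpr (fun hh => h1 (hpinj hh))
      have hf0 : f i j = 0 := by
        rcases mul_eq_zero.mp h4 with h | h
        · exact h
        · exact absurd h (pow_ne_zero 2 hne2)
      rw [hf] at hf0
      exact hU0 (Complex.normSq_eq_zero.mp hf0)
  -- the swap entry has modulus one
  refine ⟨fun m k => (U (k, m) (m, k)).arg, fun m k => ?_⟩
  have hone : f (k, m) (m, k) = 1 := by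
    rw [← hcol (m, k)]
    rw [Finset.sum_eq_single (k, m)]
    · intro i _ hi
      have h0 : U i (m, k) = 0 := hvan i (m, k) hi
      rw [hf]
      simp [h0]
    · intro h; exact absurd (Finset.mem_univ _) h
  have hone' : Complex.normSq (U (k, m) (m, k)) = 1 := hone
  have habs : ‖U (k, m) (m, k)‖ = 1 := by
    rw [Complex.norm_def, hone', Real.sqrt_one]
  have hUval : U (k, m) (m, k)
      = Complex.exp ((((U (k, m) (m, k)).arg : ℝ) : ℂ) * Complex.I) := by
    conv_lhs => rw [← Complex.norm_mul_exp_arg_mul_I (U (k, m) (m, k))]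
    rw [habs]
    simp
  rw [Matrix.mulVec_single]
  funext i
  rcases eq_or_ne i (k, m) with rfl | hi
  · simp only [Pi.smul_apply, Pi.single_eq_same, smul_eq_mul, mul_one]
    simpa using hUval
  · have h0 : U i (m, k) = 0 := hvan i (m, k) (by simpa using hi)
    simp [h0, Pi.single_eq_of_ne hi]
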